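/- Let σ : A → A⁺ be a tame substitution. Then there exist x₀ ∈ X_σ and p ≥ 1 such that σᵖ(x₀) = x₀, where σ acts on X_σ by applying σ to each coordinate and concatenating, with σ(x(0)) placed starting at coordinate 0. -/

import Mathlib

namespace SubstMin

variable {A : Type*}

/-- Apply a map `σ : A → A⁺` to a word by concatenation. -/
def substW (σ : A → List A) (w : List A) : List A := w.flatMap σ

/-- `n`-th iterate of the substitution applied to a word. -/
def substIter (σ : A → List A) (n : ℕ) (w : List A) : List A := (substW σ)^[n] w

/-- The set `A_l` of letters `a` with `|σⁿ(a)| → ∞`. -/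
def longLetters (σ : A → List A) : Set A :=
  {a | Filter.Tendsto (fun n => (substIter σ n [a]).length) Filter.atTop Filter.atTop}

/-- The set `A_s = A \ A_l`. -/
def shortLetters (σ : A → List A) : Set A := (longLetters σ)ᶜ

/-- `σ` is a substitution: letters map to nonempty words and `A_l ≠ ∅`. -/
def IsSubstitution (σ : A → List A) : Prop :=
  (∀ a, σ a ≠ []) ∧ (longLetters σ).Nonempty

/-- The language `L(σ)`: factors of some `σⁿ(a)`, `n ≥ 1`. -/
def lang (σ : A → List A) : Set (List A) :=
  {w | ∃ (a : A) (n : ℕ), 1 ≤ n ∧ w <:+: substIter σ n [a]}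

/-- The finite factor `x[s,t]` of a bi-infinite sequence. -/
def factorOf (x : ℤ → A) (s t : ℤ) : List A :=
  (List.range (t - s + 1).toNat).map fun i => x (s + (i : ℤ))

/-- The substitution dynamical system `X_σ`. -/
def XSub (σ : A → List A) : Set (ℤ → A) :=
  {x | ∀ s t : ℤ, s ≤ t → factorOf x s t ∈ lang σ}

/-- The left shift `T`. -/
def shiftT (x : ℤ → A) : ℤ → A := fun i => x (i + 1)

/-- A subshift is minimal if it is nonempty and has no nonempty proper closed
shift-invariant subset. -/
def IsMinimalSubshift [TopologicalSpace A] (X : Set (ℤ → A)) : Prop :=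
  X.Nonempty ∧ ∀ Y : Set (ℤ → A), Y ⊆ X → Y.Nonempty → IsClosed Y →
    shiftT '' Y = Y → Y = X

/-- `a ∈ A_l` is left isolated: `σⁿ(a) = u a w` with `u ∈ A_s⁺`, `w ∈ A*`. -/
def LeftIsolated (σ : A → List A) (a : A) : Prop :=
  ∃ n : ℕ, 1 ≤ n ∧ ∃ u w : List A, u ≠ [] ∧ (∀ b ∈ u, b ∈ shortLetters σ) ∧
    substIter σ n [a] = u ++ a :: w

/-- `a ∈ A_l` is right isolated: `σᵐ(a) = w a u` with `u ∈ A_s⁺`, `w ∈ A*`. -/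
def RightIsolated (σ : A → List A) (a : A) : Prop :=
  ∃ n : ℕ, 1 ≤ n ∧ ∃ u w : List A, u ≠ [] ∧ (∀ b ∈ u, b ∈ shortLetters σ) ∧
    substIter σ n [a] = w ++ a :: u

/-- `σ` is tame: no letter of `A_l` is left or right isolated. -/
def Tame (σ : A → List A) : Prop :=
  ∀ a ∈ longLetters σ, ¬ LeftIsolated σ a ∧ ¬ RightIsolated σ a

/-- `σ` is `l`-primitive. -/
def LPrimitive (σ : A → List A) : Prop :=
  ∃ n : ℕ, 1 ≤ n ∧ ∀ a ∈ longLetters σ, ∀ b ∈ longLetters σ, a ∈ substIter σ n [b]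

/-- `a → b` : `b` occurs in `σⁿ(a)` for some `n ≥ 1`. -/
def arrow (σ : A → List A) (a b : A) : Prop :=
  ∃ n : ℕ, 1 ≤ n ∧ b ∈ substIter σ n [a]

/-- `A_{∘,l} = {a ∈ A_l | a → a}`. -/
def circLong (σ : A → List A) : Set A := {a | a ∈ longLetters σ ∧ arrow σ a a}

/-- `A_{min,l}`: letters of `A_l` minimal in `A_l`. -/
def minLong (σ : A → List A) : Set A :=
  {a | a ∈ longLetters σ ∧ ∀ b ∈ longLetters σ, arrow σ a b → arrow σ b a}

/-- `x` is a periodic point of the shift. -/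
def IsPeriodicPoint (x : ℤ → A) : Prop := ∃ p : ℕ, 1 ≤ p ∧ shiftT^[p] x = x

/-- `X` is a single periodic orbit. -/
def IsSinglePeriodicOrbit (X : Set (ℤ → A)) : Prop :=
  ∃ x : ℤ → A, IsPeriodicPoint x ∧ X = Set.range fun i : ℤ => fun j => x (j + i)

/-- `y = σ(x)` : `y` is obtained from `x` by applying `σ` to each coordinate and
concatenating, with `σ(x(0))` placed starting at coordinate `0`. -/
def IsSubstImage (σ : A → List A) (x y : ℤ → A) : Prop :=
  ∃ o : ℤ → ℤ, o 0 = 0 ∧ (∀ i : ℤ, o (i + 1) = o i + (σ (x i)).length) ∧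
    ∀ i : ℤ, factorOf y (o i) (o (i + 1) - 1) = σ (x i)

/-- The map `s` on nonempty subsets of `A_l`: `s(F) = ⋃_{a ∈ F} (Lett(σ(a)) ∩ A_l)`. -/
def sMap (σ : A → List A) (F : Set A) : Set A :=
  {b | b ∈ longLetters σ ∧ ∃ a ∈ F, b ∈ σ a}

end SubstMin
open SubstMin Filter in
section
variable {A : Type*} {σ : A → List A}

namespace SubstMin

lemma substW_append (σ : A → List A) (u v : List A) :
    substW σ (u ++ v) = substW σ u ++ substW σ v := List.flatMap_append

lemma substW_singleton (σ : A → List A) (a : A) : substW σ [a] = σ a := by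
  simp [substW]

lemma substIter_zero (σ : A → List A) (w : List A) : substIter σ 0 w = w := rfl

lemma substIter_succ' (σ : A → List A) (n : ℕ) (w : List A) :
    substIter σ (n+1) w = substW σ (substIter σ n w) :=
  Function.iterate_succ_apply' _ n w

lemma substIter_succ (σ : A → List A) (n : ℕ) (w : List A) :
    substIter σ (n+1) w = substIter σ n (substW σ w) :=
  Function.iterate_succ_apply _ n w

lemma substIter_add (σ : A → List A) (m n : ℕ) (w : List A) :
    substIter σ (m+n) w = substIter σ m (substIter σ n w) :=
  Function.iterate_add_apply _ m n w

lemma substIter_append (σ : A → List A) (n : ℕ) (u v : List A) :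
    substIter σ n (u ++ v) = substIter σ n u ++ substIter σ n v := by
  induction n generalizing u v with
  | zero => rfl
  | succ n ih =>
    rw [substIter_succ, substIter_succ, substIter_succ, substW_append, ih]

lemma substIter_infix {u v : List A} (n : ℕ) (h : u <:+: v) :
    substIter σ n u <:+: substIter σ n v := by
  obtain ⟨s, t, rfl⟩ := h
  rw [substIter_append, substIter_append]
  exact ⟨substIter σ n s, substIter σ n t, rfl⟩

variable (hne : ∀ x, σ x ≠ [])
include hne

lemma length_le_substW (w : List A) : w.length ≤ (substW σ w).length := by
  induction w with
  | nil => simp [substW]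
  | cons x xs ih =>
    have : substW σ (x :: xs) = σ x ++ substW σ xs := rfl
    rw [this, List.length_append, List.length_cons]
    have hx : 1 ≤ (σ x).length := List.length_pos_iff.mpr (hne x)
    omega

lemma length_le_substIter (n : ℕ) (w : List A) : w.length ≤ (substIter σ n w).length := by
  induction n with
  | zero => simp [substIter_zero]
  | succ n ih => rw [substIter_succ']; exact le_trans ih (length_le_substW hne _)

lemma substIter_length_mono (w : List A) :
    Monotone fun n => (substIter σ n w).length := by
  intro k n hkn
  obtain ⟨t, rfl⟩ := Nat.exists_eq_add_of_le hkn
  simp only []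
  rw [show k + t = t + k by omega, substIter_add]
  exact length_le_substIter hne t _

lemma long_iff : ∀ a : A, a ∈ longLetters σ ↔
    ∀ C : ℕ, ∃ n, C ≤ (substIter σ n [a]).length := by
  intro a
  constructor
  · intro h C; exact (h.eventually_ge_atTop C).exists
  · intro h
    exact tendsto_atTop_atTop_of_monotone (substIter_length_mono hne [a]) h

lemma short_iff : ∀ a : A, a ∉ longLetters σ ↔
    ∃ C : ℕ, ∀ n, (substIter σ n [a]).length ≤ C := by
  intro a
  rw [long_iff hne]
  push_neg
  constructor
  · intro h
    obtain ⟨C, hC⟩ := h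
    exact ⟨C, fun n => le_of_lt (hC n)⟩
  · intro ⟨C, hC⟩
    exact ⟨C + 1, fun n => lt_of_le_of_lt (hC n) (Nat.lt_succ_self C)⟩

lemma short_word_bounded {w : List A} (h : ∀ y ∈ w, y ∉ longLetters σ) :
    ∃ C : ℕ, ∀ n, (substIter σ n w).length ≤ C := by
  induction w with
  | nil =>
    refine ⟨0, fun n => ?_⟩
    have : substIter σ n [] = [] := by
      induction n with
      | zero => rfl
      | succ n ih => rw [substIter_succ', ih]; rfl
    simp [this]
  | cons x xs ih =>
    obtain ⟨C1, hC1⟩ := (short_iff hne x).mp (h x (by simp))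
    obtain ⟨C2, hC2⟩ := ih (fun y hy => h y (by simp [hy]))
    refine ⟨C1 + C2, fun n => ?_⟩
    have : (x :: xs) = [x] ++ xs := rfl
    rw [this, substIter_append, List.length_append]
    exact Nat.add_le_add (hC1 n) (hC2 n)

lemma mem_short {w : List A} (hw : ∀ y ∈ w, y ∉ longLetters σ) {n : ℕ} {b : A}
    (hb : b ∈ substIter σ n w) : b ∉ longLetters σ := by
  obtain ⟨C, hC⟩ := short_word_bounded hne hw
  rw [short_iff hne]
  refine ⟨C, fun k => ?_⟩
  obtain ⟨s, t, hst⟩ := List.append_of_mem hb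
  have hinf : [b] <:+: substIter σ n w := ⟨s, t, by rw [hst]; simp⟩
  have h2 : substIter σ k [b] <:+: substIter σ k (substIter σ n w) :=
    substIter_infix k hinf
  calc (substIter σ k [b]).length ≤ (substIter σ k (substIter σ n w)).length :=
        h2.length_le
    _ = (substIter σ (k + n) w).length := by rw [substIter_add]
    _ ≤ C := hC _

lemma exists_long_letter {a : A} (ha : a ∈ longLetters σ) (n : ℕ) :
    ∃ d ∈ substIter σ n [a], d ∈ longLetters σ := by
  by_contra h
  push_neg at h
  obtain ⟨C, hC⟩ := short_word_bounded hne (w := substIter σ n [a]) h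
  have hmono := substIter_length_mono hne (σ := σ) [a]
  obtain ⟨m, hm⟩ := (long_iff hne a).mp ha (C + 1)
  have h1 : (substIter σ m [a]).length ≤ (substIter σ (m + n) [a]).length :=
    hmono (Nat.le_add_right m n)
  have h2 : (substIter σ (m + n) [a]).length
      = (substIter σ m (substIter σ n [a])).length := by rw [substIter_add]
  have := hC m
  omega

end SubstMin
end
open SubstMin Filter in
section
variable {A : Type*} {σ : A → List A}

namespace SubstMin

lemma lang_infix_closed {u w : List A} (h : u <:+: w) (hw : w ∈ lang σ) :
    u ∈ lang σ := by
  obtain ⟨a, n, hn, hinf⟩ := hw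
  exact ⟨a, n, hn, h.trans hinf⟩

lemma lang_substIter_closed {w : List A} (hw : w ∈ lang σ) (m : ℕ) :
    substIter σ m w ∈ lang σ := by
  obtain ⟨a, n, hn, hinf⟩ := hw
  refine ⟨a, m + n, by omega, ?_⟩
  rw [substIter_add]
  exact substIter_infix m hinf

lemma substIter_mem_lang (a : A) {n : ℕ} (hn : 1 ≤ n) : substIter σ n [a] ∈ lang σ :=
  ⟨a, n, hn, List.infix_refl _⟩

/-- split a word at its first long letter -/
lemma first_long_split {w : List A} (h : ∃ x ∈ w, x ∈ longLetters σ) :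
    ∃ s d t, w = s ++ d :: t ∧ (∀ y ∈ s, y ∉ longLetters σ) ∧ d ∈ longLetters σ := by
  induction w with
  | nil => simp at h
  | cons x xs ih =>
    by_cases hx : x ∈ longLetters σ
    · exact ⟨[], x, xs, rfl, by simp, hx⟩
    · obtain ⟨y, hy, hyl⟩ := h
      have hy' : y ∈ xs := by
        rcases List.mem_cons.mp hy with h1 | h1
        · exact absurd (h1 ▸ hyl) hx
        · exact h1
      obtain ⟨s, d, t, heq, hs, hd⟩ := ih ⟨y, hy', hyl⟩
      exact ⟨x :: s, d, t, by rw [heq]; rfl, by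
        intro z hz
        rcases List.mem_cons.mp hz with h1 | h1
        · exact h1 ▸ hx
        · exact hs z h1, hd⟩

/-- split a word at its last long letter -/
lemma last_long_split {w : List A} (h : ∃ x ∈ w, x ∈ longLetters σ) :
    ∃ s d t, w = s ++ d :: t ∧ d ∈ longLetters σ ∧ (∀ y ∈ t, y ∉ longLetters σ) := by
  have h' : ∃ x ∈ w.reverse, x ∈ longLetters σ := by
    obtain ⟨x, hx, hxl⟩ := h
    exact ⟨x, List.mem_reverse.mpr hx, hxl⟩
  obtain ⟨s, d, t, heq, hs, hd⟩ := first_long_split h'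
  refine ⟨t.reverse, d, s.reverse, ?_, hd, fun y hy => hs y (List.mem_reverse.mp hy)⟩
  have : w = w.reverse.reverse := (List.reverse_reverse w).symm
  rw [this, heq]
  simp

variable [Finite A] (hne : ∀ x, σ x ≠ []) (htame : Tame σ)
include hne htame

/-- Phase 1: existence of a pattern b (shorts) a in the language with b, a long. -/
lemma exists_pattern (hc : (longLetters σ).Nonempty) :
    ∃ b a s, b ∈ longLetters σ ∧ a ∈ longLetters σ ∧
      (∀ y ∈ s, y ∉ longLetters σ) ∧ ([b] ++ s ++ [a]) ∈ lang σ := by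
  by_contra H
  push_neg at H
  -- under H: every word of the language with a long letter splits as shorts-long-shorts
  have key : ∀ w ∈ lang σ, (∃ x ∈ w, x ∈ longLetters σ) →
      ∃ s d t, w = s ++ d :: t ∧ (∀ y ∈ s, y ∉ longLetters σ) ∧ d ∈ longLetters σ ∧
        (∀ y ∈ t, y ∉ longLetters σ) := by
    intro w hw hx
    obtain ⟨s, d, t, rfl, hs, hd⟩ := first_long_split hx
    refine ⟨s, d, t, rfl, hs, hd, ?_⟩
    by_contra ht
    push_neg at ht
    obtain ⟨e, he, hel⟩ := ht
    obtain ⟨s', d', t', rfl, hs', hd'⟩ := first_long_split ⟨e, he, hel⟩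
    have : ([d] ++ s' ++ [d']) ∈ lang σ := by
      refine lang_infix_closed ?_ hw
      exact ⟨s, t', by simp⟩
    exact H d d' s' hd hd' hs' this
  -- step function on long letters
  have step : ∀ x : A, x ∈ longLetters σ → ∃ y s t,
      substW σ [x] = s ++ y :: t ∧ y ∈ longLetters σ ∧
        (∀ z ∈ s, z ∉ longLetters σ) ∧ (∀ z ∈ t, z ∉ longLetters σ) := by
    intro x hx
    have hw : substW σ [x] ∈ lang σ := by
      have := substIter_mem_lang (σ := σ) x (n := 1) le_rfl
      rwa [show substIter σ 1 [x] = substW σ [x] from rfl] at this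
    obtain ⟨d, hd, hdl⟩ := exists_long_letter hne hx 1
    rw [show substIter σ 1 [x] = substW σ [x] from rfl] at hd
    obtain ⟨s, d', t, heq, hs, hd', ht⟩ := key _ hw ⟨d, hd, hdl⟩
    exact ⟨d', s, t, heq, hd', hs, ht⟩
  obtain ⟨c, hcl⟩ := hc
  -- the orbit in the long letters
  let E : ℕ → {x : A // x ∈ longLetters σ} := fun n =>
    Nat.rec ⟨c, hcl⟩ (fun _ prev =>
      ⟨Classical.choose (step prev.1 prev.2),
       (Classical.choose_spec (Classical.choose_spec (step prev.1 prev.2))).choose_spec.2.1⟩) n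
  have hEsucc : ∀ n : ℕ, ∃ s t, substW σ [(E n).1] = s ++ (E (n+1)).1 :: t ∧
      (∀ z ∈ s, z ∉ longLetters σ) ∧ (∀ z ∈ t, z ∉ longLetters σ) := by
    intro n
    obtain ⟨s, t, heq, hy, hs, ht⟩ :=
      Classical.choose_spec (step (E n).1 (E n).2)
    exact ⟨s, t, heq, hs, ht⟩
  have hiter : ∀ i k : ℕ, ∃ s t, substIter σ k [(E i).1] = s ++ (E (i+k)).1 :: t ∧
      (∀ z ∈ s, z ∉ longLetters σ) ∧ (∀ z ∈ t, z ∉ longLetters σ) := by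
    intro i k
    induction k with
    | zero => exact ⟨[], [], rfl, by simp, by simp⟩
    | succ k ih =>
      obtain ⟨s, t, heq, hs, ht⟩ := ih
      obtain ⟨s', t', heq', hs', ht'⟩ := hEsucc (i + k)
      refine ⟨substW σ s ++ s', t' ++ substW σ t, ?_, ?_, ?_⟩
      · rw [substIter_succ', heq]
        rw [show s ++ (E (i+k)).1 :: t = s ++ ([(E (i+k)).1] ++ t) by simp]
        rw [substW_append, substW_append, heq']
        simp [show i + (k+1) = i + k + 1 by omega]
      · intro z hz
        rcases List.mem_append.mp hz with h1 | h1
        · exact mem_short hne hs (n := 1) h1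
        · exact hs' z h1
      · intro z hz
        rcases List.mem_append.mp hz with h1 | h1
        · exact ht' z h1
        · exact mem_short hne ht (n := 1) h1
  obtain ⟨i0, j0, hij, hEeq⟩ := Finite.exists_ne_map_eq_of_infinite E
  wlog hlt : i0 < j0 generalizing i0 j0
  · exact this j0 i0 (Ne.symm hij) hEeq.symm (by omega)
  set e := (E i0).1 with he
  have hel : e ∈ longLetters σ := (E i0).2
  set m := j0 - i0 with hm
  have hm1 : 1 ≤ m := by omega
  obtain ⟨s, t, heq, hs, ht⟩ := hiter i0 m
  rw [show i0 + m = j0 by omega, ← hEeq] at heq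
  have hsnil : s = [] := by
    by_contra hsne
    exact (htame e hel).1 ⟨m, hm1, s, t, hsne, fun y hy => hs y hy, heq⟩
  have htnil : t = [] := by
    by_contra htne
    exact (htame e hel).2 ⟨m, hm1, t, s, htne, fun y hy => ht y hy, heq⟩
  rw [hsnil, htnil] at heq
  simp only [List.nil_append, List.append_nil] at heq
  have hfix : ∀ q : ℕ, substIter σ (q * m) [e] = [e] := by
    intro q
    induction q with
    | zero => rw [Nat.zero_mul]; rfl
    | succ q ih =>
      rw [show (q+1) * m = q * m + m by ring, substIter_add, heq, ih]
  obtain ⟨n, hn⟩ := (long_iff hne e).mp hel 2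
  have h1 : (substIter σ n [e]).length ≤ (substIter σ (n * m) [e]).length :=
    substIter_length_mono hne [e] (Nat.le_mul_of_pos_right n hm1)
  rw [hfix n] at h1
  simp at h1
  omega

end SubstMin
end
open SubstMin Filter in
section
variable {A : Type*} {σ : A → List A}

namespace SubstMin

variable [Finite A] (hne : ∀ x, σ x ≠ []) (htame : Tame σ)
include hne htame

lemma exists_periodic_data (hc : (longLetters σ).Nonempty) :
    ∃ (a b : A) (P : ℕ) (va wb sStar : List A),
      a ∈ longLetters σ ∧ b ∈ longLetters σ ∧ 1 ≤ P ∧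
      substIter σ P [a] = a :: va ∧
      substIter σ P [b] = wb ++ [b] ∧
      substIter σ P sStar = sStar ∧
      ([b] ++ sStar ++ [a]) ∈ lang σ := by
  classical
  obtain ⟨b₀, a₀, s₀, hb₀, ha₀, hs₀, hlang₀⟩ := exists_pattern hne htame hc
  -- the type of "adjacent (mod short) pairs of long letters"
  let T := {p : A × A // p.1 ∈ longLetters σ ∧ p.2 ∈ longLetters σ ∧
      ∃ s, (∀ y ∈ s, y ∉ longLetters σ) ∧ ([p.1] ++ s ++ [p.2]) ∈ lang σ}
  have S1 : ∀ t : T, ∃ t' : T,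
      (∃ u tt, substW σ [t.1.1] = u ++ [t'.1.1] ++ tt ∧ ∀ z ∈ tt, z ∉ longLetters σ) ∧
      (∃ ss v, substW σ [t.1.2] = ss ++ [t'.1.2] ++ v ∧ ∀ z ∈ ss, z ∉ longLetters σ) := by
    rintro ⟨⟨b, a⟩, hb, ha, s, hs, hlang⟩
    obtain ⟨db, hdb, hdbl⟩ := exists_long_letter hne hb 1
    obtain ⟨da, hda, hdal⟩ := exists_long_letter hne ha 1
    rw [show substIter σ 1 [b] = substW σ [b] from rfl] at hdb
    rw [show substIter σ 1 [a] = substW σ [a] from rfl] at hda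
    obtain ⟨u, b', tt, heqb, hb'l, htt⟩ := last_long_split ⟨db, hdb, hdbl⟩
    obtain ⟨ss, a', v, heqa, hss, ha'l⟩ := first_long_split ⟨da, hda, hdal⟩
    have hlang1 : substW σ ([b] ++ s ++ [a]) ∈ lang σ := by
      have := lang_substIter_closed hlang 1
      rwa [show substIter σ 1 ([b] ++ s ++ [a]) = substW σ ([b] ++ s ++ [a]) from rfl]
        at this
    have hdecomp : substW σ ([b] ++ s ++ [a]) =
        u ++ ([b'] ++ (tt ++ substW σ s ++ ss) ++ [a']) ++ v := by
      rw [substW_append, substW_append, heqb, heqa]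
      simp
    have hlang2 : ([b'] ++ (tt ++ substW σ s ++ ss) ++ [a']) ∈ lang σ := by
      refine lang_infix_closed ⟨u, v, ?_⟩ hlang1
      rw [hdecomp]
    have hshort : ∀ y ∈ tt ++ substW σ s ++ ss, y ∉ longLetters σ := by
      intro y hy
      rcases List.mem_append.mp hy with h1 | h1
      · rcases List.mem_append.mp h1 with h2 | h2
        · exact htt y h2
        · exact mem_short hne hs (n := 1) h2
      · exact hss y h1
    refine ⟨⟨(b', a'), hb'l, ha'l, tt ++ substW σ s ++ ss, hshort, hlang2⟩,
      ⟨u, tt, by rw [heqb]; simp, htt⟩, ⟨ss, v, by rw [heqa]; simp, hss⟩⟩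
  let g : T → T := fun t => Classical.choose (S1 t)
  have hg1 : ∀ t : T, ∃ u tt, substW σ [t.1.1] = u ++ [(g t).1.1] ++ tt ∧
      ∀ z ∈ tt, z ∉ longLetters σ := fun t => (Classical.choose_spec (S1 t)).1
  have hg2 : ∀ t : T, ∃ ss v, substW σ [t.1.2] = ss ++ [(g t).1.2] ++ v ∧
      ∀ z ∈ ss, z ∉ longLetters σ := fun t => (Classical.choose_spec (S1 t)).2
  -- iterate the step
  have hgk1 : ∀ (t : T) (k : ℕ), ∃ u tt,
      substIter σ k [t.1.1] = u ++ [(g^[k] t).1.1] ++ tt ∧ ∀ z ∈ tt, z ∉ longLetters σ := by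
    intro t k
    induction k with
    | zero => exact ⟨[], [], by simp [substIter_zero], by simp⟩
    | succ k ih =>
      obtain ⟨u, tt, heq, htt⟩ := ih
      obtain ⟨u', tt', heq', htt'⟩ := hg1 (g^[k] t)
      refine ⟨substW σ u ++ u', tt' ++ substW σ tt, ?_, ?_⟩
      · rw [substIter_succ', heq, substW_append, substW_append, heq',
          Function.iterate_succ_apply']
        simp
      · intro z hz
        rcases List.mem_append.mp hz with h1 | h1
        · exact htt' z h1
        · exact mem_short hne htt (n := 1) h1
  have hgk2 : ∀ (t : T) (k : ℕ), ∃ ss v,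
      substIter σ k [t.1.2] = ss ++ [(g^[k] t).1.2] ++ v ∧ ∀ z ∈ ss, z ∉ longLetters σ := by
    intro t k
    induction k with
    | zero => exact ⟨[], [], by simp [substIter_zero], by simp⟩
    | succ k ih =>
      obtain ⟨ss, v, heq, hss⟩ := ih
      obtain ⟨ss', v', heq', hss'⟩ := hg2 (g^[k] t)
      refine ⟨substW σ ss ++ ss', v' ++ substW σ v, ?_, ?_⟩
      · rw [substIter_succ', heq, substW_append, substW_append, heq',
          Function.iterate_succ_apply']
        simp
      · intro z hz
        rcases List.mem_append.mp hz with h1 | h1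
        · exact mem_short hne hss (n := 1) h1
        · exact hss' z h1
  -- pigeonhole on the orbit of the initial pair
  have : ∃ s, (∀ y ∈ s, y ∉ longLetters σ) ∧ ([b₀] ++ s ++ [a₀]) ∈ lang σ :=
    ⟨s₀, hs₀, hlang₀⟩
  let t₀ : T := ⟨(b₀, a₀), hb₀, ha₀, this⟩
  obtain ⟨i0, j0, hij, hEeq⟩ := Finite.exists_ne_map_eq_of_infinite (fun n => g^[n] t₀)
  wlog hlt : i0 < j0 generalizing i0 j0
  · exact this j0 i0 (Ne.symm hij) hEeq.symm (by omega)
  set t1 : T := g^[i0] t₀ with ht1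
  set b : A := t1.1.1 with hbdef
  set a : A := t1.1.2 with hadef
  set m : ℕ := j0 - i0 with hmdef
  have hm1 : 1 ≤ m := by omega
  have hfixt : g^[m] t1 = t1 := by
    rw [ht1, ← Function.iterate_add_apply, show m + i0 = j0 by omega]
    exact hEeq.symm
  have hbl : b ∈ longLetters σ := t1.2.1
  have hal : a ∈ longLetters σ := t1.2.2.1
  -- suffix property for b
  obtain ⟨u, tt, hequ, htt⟩ := hgk1 t1 m
  rw [hfixt] at hequ
  have httnil : tt = [] := by
    by_contra htne
    refine (htame b hbl).2 ⟨m, hm1, tt, u, htne, fun y hy => htt y hy, ?_⟩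
    rw [hequ]; simp [hbdef]
  rw [httnil, List.append_nil] at hequ
  -- prefix property for a
  obtain ⟨ss, v, heqv, hss⟩ := hgk2 t1 m
  rw [hfixt] at heqv
  have hssnil : ss = [] := by
    by_contra hsne
    refine (htame a hal).1 ⟨m, hm1, ss, v, hsne, fun y hy => hss y hy, ?_⟩
    rw [heqv]; simp [hadef]
  rw [hssnil, List.nil_append] at heqv
  -- the gap between b and a
  obtain ⟨s₁, hs₁, hlang₁⟩ := t1.2.2.2
  -- iterates of multiples of m
  have hbk : ∀ k : ℕ, ∃ u', substIter σ (k * m) [b] = u' ++ [b] := by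
    intro k
    induction k with
    | zero => exact ⟨[], by rw [Nat.zero_mul]; rfl⟩
    | succ k ih =>
      obtain ⟨u', ih⟩ := ih
      refine ⟨substIter σ (k * m) u ++ u', ?_⟩
      rw [show (k+1) * m = k * m + m by ring, substIter_add, hequ,
        substIter_append, ih]
      simp
  have hak : ∀ k : ℕ, ∃ v', substIter σ (k * m) [a] = [a] ++ v' := by
    intro k
    induction k with
    | zero => exact ⟨[], by rw [Nat.zero_mul]; rfl⟩
    | succ k ih =>
      obtain ⟨v', ih⟩ := ih
      refine ⟨v' ++ substIter σ (k * m) v, ?_⟩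
      rw [show (k+1) * m = k * m + m by ring, substIter_add, heqv,
        substIter_append, ih]
      simp
  -- periodization of the gap word
  obtain ⟨C, hC⟩ := short_word_bounded hne hs₁
  haveI : Finite {l : List A // l.length ≤ C} := by
    have := List.finite_length_le A C
    exact this.to_subtype
  let f : ℕ → {l : List A // l.length ≤ C} := fun k =>
    ⟨substIter σ (k * m) s₁, hC _⟩
  obtain ⟨k0, k1, hkne, hkeq⟩ := Finite.exists_ne_map_eq_of_infinite f
  wlog hklt : k0 < k1 generalizing k0 k1
  · exact this k1 k0 (Ne.symm hkne) hkeq.symm (by omega)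
  have hseq : substIter σ (k0 * m) s₁ = substIter σ (k1 * m) s₁ :=
    congrArg Subtype.val hkeq
  set sStar : List A := substIter σ (k0 * m) s₁ with hsStar
  set q : ℕ := k1 - k0 with hqdef
  have hq1 : 1 ≤ q := by omega
  set P : ℕ := q * m with hPdef
  have hP1 : 1 ≤ P := Nat.one_le_iff_ne_zero.mpr (by positivity)
  have hsfix : substIter σ P sStar = sStar := by
    rw [hsStar, ← substIter_add, show q * m + k0 * m = k1 * m by
      rw [← Nat.add_mul]; congr 1; omega]
    exact hseq.symm
  obtain ⟨va, hva⟩ := hak q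
  obtain ⟨wb, hwb⟩ := hbk q
  -- the language witness
  obtain ⟨u', hu'⟩ := hbk k0
  obtain ⟨v', hv'⟩ := hak k0
  have hwit : ([b] ++ sStar ++ [a]) ∈ lang σ := by
    have h1 : substIter σ (k0 * m) ([b] ++ s₁ ++ [a]) ∈ lang σ :=
      lang_substIter_closed hlang₁ _
    rw [substIter_append, substIter_append, hu', hv'] at h1
    refine lang_infix_closed ⟨u', v', ?_⟩ h1
    rw [hsStar]; simp
  exact ⟨a, b, P, va, wb, sStar, hal, hbl, hP1, hva, hwb, hsfix, hwit⟩

end SubstMin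
end
open SubstMin Filter in
section
variable {A : Type*} {σ : A → List A}

namespace SubstMin

lemma coe_range_eq (n : ℕ) : ((List.range n).flatMap fun a => ([(a : ℤ)] : List ℤ)) =
    (List.range n).map Int.ofNat := by
  induction n with
  | zero => rfl
  | succ n ih => simp [List.range_succ] at ih ⊢; exact ih

lemma prefix_getD {l1 l2 : List A} (h : l1 <+: l2) {j : ℕ} (hj : j < l1.length)
    (d : A) : l2.getD j d = l1.getD j d := by
  rw [List.getD_eq_getElem l1 d hj,
    List.getD_eq_getElem l2 d (lt_of_lt_of_le hj h.length_le)]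
  exact (h.getElem hj).symm

lemma suffix_getD {l1 l2 : List A} (h : l1 <:+ l2) {i : ℕ} (hi1 : 1 ≤ i)
    (hi2 : i ≤ l1.length) (d : A) :
    l2.getD (l2.length - i) d = l1.getD (l1.length - i) d := by
  obtain ⟨w, rfl⟩ := h
  rw [List.getD_eq_getElem l1 d (by omega),
    List.getD_eq_getElem (w ++ l1) d (by rw [List.length_append]; omega)]
  rw [List.getElem_append_right (by rw [List.length_append]; omega)]
  congr 1
  rw [List.length_append]
  omega

lemma substW_prefix {l1 l2 : List A} (h : l1 <+: l2) :
    substW σ l1 <+: substW σ l2 := by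
  obtain ⟨r, rfl⟩ := h
  rw [substW_append]
  exact ⟨substW σ r, rfl⟩

lemma substW_suffix {l1 l2 : List A} (h : l1 <:+ l2) :
    substW σ l1 <:+ substW σ l2 := by
  obtain ⟨r, rfl⟩ := h
  rw [substW_append]
  exact ⟨substW σ r, rfl⟩

lemma substW_cons (σ : A → List A) (x : A) (l : List A) :
    substW σ (x :: l) = σ x ++ substW σ l := rfl

lemma factorOf_length (x : ℤ → A) (s t : ℤ) :
    (factorOf x s t).length = (t - s + 1).toNat := by
  show ((List.range (t - s + 1).toNat).map fun i => x (s + (i : ℤ))).length = _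
  simp only [List.pure_def, List.bind_eq_flatMap, coe_range_eq, List.length_map,
    List.length_range]
  simp

lemma factorOf_getElem (x : ℤ → A) (s t : ℤ) (u : ℕ) (hu : u < (factorOf x s t).length) :
    (factorOf x s t)[u] = x (s + u) := by
  have h2 : u < ((List.range (t - s + 1).toNat).map fun i => x (s + (i : ℤ))).length := by
    have := factorOf_length x s t
    rw [factorOf] at hu
    exact hu
  show ((List.range (t - s + 1).toNat).map fun i => x (s + (i : ℤ)))[u]'h2 = _
  simp only [List.pure_def, List.bind_eq_flatMap, coe_range_eq] at h2 ⊢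
  rw [List.getElem_map]
  have e : ∀ l : List ℕ, List.flatMap (fun a : ℕ => [(a:ℤ)]) l = l.map Int.ofNat := fun l => by
    induction l <;> simp_all
  simp only [e, List.getElem_map, List.getElem_range]
  rfl

lemma factorOf_eq {x : ℤ → A} {s t : ℤ} {L : List A}
    (hlen : (t - s + 1).toNat = L.length)
    (hget : ∀ (u : ℕ) (hu : u < L.length), x (s + u) = L[u]) :
    factorOf x s t = L := by
  refine List.ext_getElem (by rw [factorOf_length, hlen]) ?_
  intro u h1 h2
  rw [factorOf_getElem x s t u h1]
  exact hget u h2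

end SubstMin
end
open SubstMin Filter in
section
variable {A : Type*}

namespace SubstMin

lemma construct (σ : A → List A) (hne : ∀ x, σ x ≠ []) {a b : A} {P : ℕ}
    {va wb sStar : List A}
    (hal : a ∈ longLetters σ) (hbl : b ∈ longLetters σ) (hP1 : 1 ≤ P)
    (hva : substIter σ P [a] = a :: va) (hwb : substIter σ P [b] = wb ++ [b])
    (hsfix : substIter σ P sStar = sStar) (hwit : ([b] ++ sStar ++ [a]) ∈ lang σ) :
    ∃ x₀ ∈ XSub σ, ∃ p : ℕ, 1 ≤ p ∧ ∃ ys : ℕ → (ℤ → A),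
      ys 0 = x₀ ∧ ys p = x₀ ∧ ∀ k < p, IsSubstImage σ (ys k) (ys (k + 1)) := by
  classical
  set RW : ℕ → List A := fun m => substIter σ m [a] with hRW
  set LW : ℕ → List A := fun m => substIter σ m ([b] ++ sStar) with hLW
  -- chain lemmas
  have chainR1 : ∀ m, RW m <+: RW (m + P) := by
    intro m
    refine ⟨substIter σ m va, ?_⟩
    rw [hRW]
    simp only []
    rw [substIter_add, hva, show a :: va = [a] ++ va from rfl, substIter_append]
  have chainR : ∀ m t, RW m <+: RW (m + t * P) := by
    intro m t
    induction t with
    | zero => simp [List.prefix_refl]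
    | succ t ih =>
      refine ih.trans ?_
      rw [show m + (t+1) * P = (m + t * P) + P by ring]
      exact chainR1 _
  have chainL1 : ∀ m, LW m <:+ LW (m + P) := by
    intro m
    refine ⟨substIter σ m wb, ?_⟩
    show substIter σ m wb ++ substIter σ m ([b] ++ sStar)
      = substIter σ (m + P) ([b] ++ sStar)
    rw [substIter_add, substIter_append σ P [b] sStar, hwb, hsfix,
      List.append_assoc]
    simp [substIter_append]
  have chainL : ∀ m t, LW m <:+ LW (m + t * P) := by
    intro m t
    induction t with
    | zero => simp [List.suffix_refl]
    | succ t ih =>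
      refine ih.trans ?_
      rw [show m + (t+1) * P = (m + t * P) + P by ring]
      exact chainL1 _
  -- growth
  have growR : ∀ m C, ∃ n, C ≤ (RW (n * P + m)).length := by
    intro m C
    obtain ⟨N, hN⟩ := (long_iff hne a).mp hal C
    refine ⟨N, le_trans hN ?_⟩
    exact substIter_length_mono hne [a] (by nlinarith [hP1])
  have growL : ∀ m C, ∃ n, C ≤ (LW (n * P + m)).length := by
    intro m C
    obtain ⟨N, hN⟩ := (long_iff hne b).mp hbl C
    refine ⟨N, le_trans hN ?_⟩
    have h1 : (substIter σ (N * P + m) [b]).length ≤ (LW (N * P + m)).length := by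
      rw [hLW]
      simp only []
      rw [substIter_append, List.length_append]
      omega
    exact le_trans (substIter_length_mono hne [b] (by nlinarith [hP1])) h1
  -- the points
  set z : ℕ → ℤ → A := fun m j =>
    if 0 ≤ j then (RW (Nat.find (growR m (j.toNat + 1)) * P + m)).getD j.toNat a
    else (LW (Nat.find (growL m (-j).toNat) * P + m)).getD
      ((LW (Nat.find (growL m (-j).toNat) * P + m)).length - (-j).toNat) a
    with hz
  have chainR' : ∀ m n1 n2, n1 ≤ n2 → RW (n1 * P + m) <+: RW (n2 * P + m) := by
    intro m n1 n2 h
    have h2 := chainR (n1 * P + m) (n2 - n1)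
    have e1 := Nat.sub_mul n2 n1 P
    have e2 := Nat.mul_le_mul_right P h
    rwa [show n1 * P + m + (n2 - n1) * P = n2 * P + m by omega] at h2
  have chainL' : ∀ m n1 n2, n1 ≤ n2 → LW (n1 * P + m) <:+ LW (n2 * P + m) := by
    intro m n1 n2 h
    have h2 := chainL (n1 * P + m) (n2 - n1)
    have e1 := Nat.sub_mul n2 n1 P
    have e2 := Nat.mul_le_mul_right P h
    rwa [show n1 * P + m + (n2 - n1) * P = n2 * P + m by omega] at h2
  -- access lemmas
  have zR : ∀ m n (jN : ℕ), jN < (RW (n * P + m)).length →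
      z m (jN : ℤ) = (RW (n * P + m)).getD jN a := by
    intro m n jN hjN
    have h0 : (0:ℤ) ≤ (jN : ℤ) := Int.natCast_nonneg jN
    rw [hz]
    simp only [if_pos h0, Int.toNat_natCast]
    set n1 := Nat.find (growR m (jN + 1)) with hn1
    have h1 : jN + 1 ≤ (RW (n1 * P + m)).length := Nat.find_spec (growR m (jN + 1))
    set n2 := max n1 n with hn2
    have e1 : (RW (n2 * P + m)).getD jN a = (RW (n1 * P + m)).getD jN a :=
      prefix_getD (chainR' m n1 n2 (le_max_left _ _)) (by omega) a
    have e2 : (RW (n2 * P + m)).getD jN a = (RW (n * P + m)).getD jN a :=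
      prefix_getD (chainR' m n n2 (le_max_right _ _)) hjN a
    rw [← e1, e2]
  have zL : ∀ m n (i : ℕ), 1 ≤ i → i ≤ (LW (n * P + m)).length →
      z m (-(i : ℤ)) = (LW (n * P + m)).getD ((LW (n * P + m)).length - i) a := by
    intro m n i hi1 hi2
    have h0 : ¬ (0:ℤ) ≤ -(i : ℤ) := by
      have : (1:ℤ) ≤ (i : ℤ) := by exact_mod_cast hi1
      omega
    rw [hz]
    simp only [if_neg h0, neg_neg, Int.toNat_natCast]
    set n1 := Nat.find (growL m i) with hn1
    have h1 : i ≤ (LW (n1 * P + m)).length := Nat.find_spec (growL m i)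
    set n2 := max n1 n with hn2
    have e1 : (LW (n2 * P + m)).getD ((LW (n2 * P + m)).length - i) a
        = (LW (n1 * P + m)).getD ((LW (n1 * P + m)).length - i) a :=
      suffix_getD (chainL' m n1 n2 (le_max_left _ _)) hi1 h1 a
    have e2 : (LW (n2 * P + m)).getD ((LW (n2 * P + m)).length - i) a
        = (LW (n * P + m)).getD ((LW (n * P + m)).length - i) a :=
      suffix_getD (chainL' m n n2 (le_max_right _ _)) hi1 hi2 a
    rw [← e1, e2]
  -- periodicity
  have zper : ∀ m, z (m + P) = z m := by
    intro m
    funext j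
    rcases le_or_gt 0 j with hj | hj
    · set jN := j.toNat with hjN
      have hjj : (jN : ℤ) = j := Int.toNat_of_nonneg hj
      obtain ⟨n, hn⟩ := growR m (jN + 1)
      have hsame : n * P + (m + P) = (n + 1) * P + m := by ring
      have hlen : jN < (RW ((n + 1) * P + m)).length := by
        have := (chainR' m n (n + 1) (by omega)).length_le
        omega
      have e1 : z (m + P) ((jN : ℤ)) = (RW (n * P + (m + P))).getD jN a :=
        zR (m + P) n jN (by rw [hsame]; exact hlen)
      have e2 : z m ((jN : ℤ)) = (RW ((n + 1) * P + m)).getD jN a :=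
        zR m (n + 1) jN hlen
      rw [← hjj, e1, e2, hsame]
    · set i := (-j).toNat with hidef
      have hi1 : 1 ≤ i := by
        rw [hidef]; omega
      have hjj : -(i : ℤ) = j := by
        rw [hidef]; omega
      obtain ⟨n, hn⟩ := growL m i
      have hsame : n * P + (m + P) = (n + 1) * P + m := by ring
      have hlen : i ≤ (LW ((n + 1) * P + m)).length := by
        have := (chainL' m n (n + 1) (by omega)).length_le
        omega
      have e1 : z (m + P) (-(i : ℤ)) = (LW (n * P + (m + P))).getD
          ((LW (n * P + (m + P))).length - i) a :=
        zL (m + P) n i hi1 (by rw [hsame]; exact hlen)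
      have e2 : z m (-(i : ℤ)) = (LW ((n + 1) * P + m)).getD
          ((LW ((n + 1) * P + m)).length - i) a :=
        zL m (n + 1) i hi1 hlen
      rw [← hjj, e1, e2, hsame]
  -- membership
  have zmem : z 0 ∈ XSub σ := by
    intro s t hst
    set CL := (1 - s).toNat with hCL
    set CR := (t + 1).toNat with hCR
    obtain ⟨nL, hnL⟩ := growL 0 CL
    obtain ⟨nR, hnR⟩ := growR 0 CR
    set n := max nL nR with hn
    have hLlen : CL ≤ (LW (n * P + 0)).length :=
      le_trans hnL (chainL' 0 nL n (le_max_left _ _)).length_le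
    have hRlen : CR ≤ (RW (n * P + 0)).length :=
      le_trans hnR (chainR' 0 nR n (le_max_right _ _)).length_le
    set Lw := LW (n * P + 0) with hLw
    set Rw := RW (n * P + 0) with hRw
    set W := Lw ++ Rw with hWdef
    have hWlen : W.length = Lw.length + Rw.length := List.length_append
    have hW : W ∈ lang σ := by
      have h1 : substIter σ (n * P + 0) (([b] ++ sStar) ++ [a]) ∈ lang σ := by
        refine lang_substIter_closed ?_ _
        rwa [List.append_assoc]
      rw [substIter_append] at h1
      exact h1
    have key : ∀ j : ℤ, s ≤ j → j ≤ t →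
        z 0 j = W.getD (((Lw.length : ℤ) + j).toNat) a := by
      intro j hsj hjt
      rcases le_or_gt 0 j with hj | hj
      · set jN := j.toNat with hjN
        have hjj : (jN : ℤ) = j := Int.toNat_of_nonneg hj
        have hlt : jN < Rw.length := by omega
        have e1 : z 0 ((jN : ℤ)) = Rw.getD jN a := zR 0 n jN hlt
        have hidx : ((Lw.length : ℤ) + j).toNat = Lw.length + jN := by omega
        rw [hidx, ← hjj, e1]
        rw [List.getD_eq_getElem Rw a hlt,
          List.getD_eq_getElem W a (by omega)]
        have : W[Lw.length + jN]'(by omega) = Rw[jN]'hlt := by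
          simp only [hWdef]
          rw [List.getElem_append_right (by omega)]
          congr 1
          omega
        rw [this]
      · set i := (-j).toNat with hidef
        have hi1 : 1 ≤ i := by omega
        have hjj : -(i : ℤ) = j := by omega
        have hile : i ≤ Lw.length := by omega
        have e1 : z 0 (-(i : ℤ)) = Lw.getD (Lw.length - i) a := zL 0 n i hi1 hile
        have hidx : ((Lw.length : ℤ) + j).toNat = Lw.length - i := by omega
        rw [hidx, ← hjj, e1]
        rw [List.getD_eq_getElem Lw a (by omega),
          List.getD_eq_getElem W a (by omega)]
        have : W[Lw.length - i]'(by omega) = Lw[Lw.length - i]'(by omega) := by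
          simp only [hWdef]
          rw [List.getElem_append_left (by omega)]
        rw [this]
    set L : List A := (W.drop (((Lw.length : ℤ) + s).toNat)).take ((t - s + 1).toNat)
      with hLdef
    have hdropidx : (((Lw.length : ℤ) + s).toNat) + ((t - s + 1).toNat) ≤ W.length := by
      omega
    have hLlen2 : L.length = (t - s + 1).toNat := by
      rw [hLdef, List.length_take, List.length_drop]
      omega
    have hfac : factorOf (z 0) s t = L := by
      refine factorOf_eq (by omega) ?_
      intro u hu
      have hidx2 : ((Lw.length : ℤ) + (s + u)).toNat
          = (((Lw.length : ℤ) + s).toNat) + u := by omega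
      have h3 : z 0 (s + u) = W.getD (((Lw.length : ℤ) + (s + u)).toNat) a := by
        refine key (s + u) (by omega) (by omega)
      have h4 : L[u] = W[(((Lw.length : ℤ) + s).toNat) + u]'(by omega) := by
        simp only [hLdef, List.getElem_take, List.getElem_drop]
      rw [h3, hidx2, h4]
      rw [List.getD_eq_getElem W a (by omega)]
    rw [hfac]
    refine lang_infix_closed ?_ hW
    exact ((List.take_prefix _ _).isInfix).trans ((List.drop_suffix _ _).isInfix)
  -- successor formulas for the approximating words
  have hRWsucc : ∀ M, substW σ (RW M) = RW (M + 1) := by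
    intro M
    exact (substIter_succ' σ M [a]).symm
  have hLWsucc : ∀ M, substW σ (LW M) = LW (M + 1) := by
    intro M
    exact (substIter_succ' σ M ([b] ++ sStar)).symm
  -- substitution step
  have zstep : ∀ m, IsSubstImage σ (z m) (z (m + 1)) := by
    intro m
    set Fi : ℕ → List A := fun k => (List.range k).map (fun (u : ℕ) => z m ((u : ℤ)))
      with hFi
    set Gi : ℕ → List A := fun k =>
      (List.range k).map (fun (u : ℕ) => z m (-(k : ℤ) + (u : ℤ))) with hGi
    have hFiLen : ∀ k, (Fi k).length = k := by
      intro k; rw [hFi]; simp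
    have hGiLen : ∀ k, (Gi k).length = k := by
      intro k; rw [hGi]; simp
    have hFiGet : ∀ k (u : ℕ) (hu : u < (Fi k).length), (Fi k)[u] = z m ((u : ℤ)) := by
      intro k u hu
      simp only [hFi, List.getElem_map, List.getElem_range]
    have hGiGet : ∀ k (u : ℕ) (hu : u < (Gi k).length),
        (Gi k)[u] = z m (-(k : ℤ) + (u : ℤ)) := by
      intro k u hu
      simp only [hGi, List.getElem_map, List.getElem_range]
    have hFsucc : ∀ k, Fi (k + 1) = Fi k ++ [z m ((k : ℤ))] := by
      intro k
      rw [hFi]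
      simp only [List.range_succ, List.map_append, List.map_cons, List.map_nil]
    have hGsucc : ∀ k, Gi (k + 1) = z m (-((k : ℤ) + 1)) :: Gi k := by
      intro k
      refine List.ext_getElem (by rw [hGiLen]; simp [hGiLen]) ?_
      intro u h1 h2
      rw [hGiGet (k+1) u h1]
      match u with
      | 0 =>
        rw [List.getElem_cons_zero]
        congr 1 <;> omega
      | v + 1 =>
        rw [List.getElem_cons_succ]
        rw [hGiGet k v (by rw [hGiLen] at h1 ⊢; omega)]
        congr 1 <;> omega
    -- prefix/suffix approximation of the points by finite words
    have hFpref : ∀ k n, k ≤ (RW (n * P + m)).length → Fi k <+: RW (n * P + m) := by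
      intro k n hk
      have : Fi k = (RW (n * P + m)).take k := by
        refine List.ext_getElem (by rw [hFiLen, List.length_take]; omega) ?_
        intro u h1 h2
        rw [hFiGet k u h1, List.getElem_take]
        rw [hFiLen] at h1
        rw [zR m n u (by omega), List.getD_eq_getElem _ a (by omega)]
      rw [this]
      exact List.take_prefix _ _
    have hGsuf : ∀ k n, k ≤ (LW (n * P + m)).length → Gi k <:+ LW (n * P + m) := by
      intro k n hk
      have : Gi k = (LW (n * P + m)).drop ((LW (n * P + m)).length - k) := by
        refine List.ext_getElem (by rw [hGiLen, List.length_drop]; omega) ?_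
        intro u h1 h2
        rw [hGiGet k u h1, List.getElem_drop]
        rw [hGiLen] at h1
        have hcast : -((k : ℤ)) + (u : ℤ) = -(((k - u : ℕ) : ℤ)) := by
          push_cast [Nat.cast_sub (le_of_lt h1)]
          ring
        rw [hcast, zL m n (k - u) (by omega) (by omega),
          List.getD_eq_getElem _ a (by omega)]
        congr 1
        omega
      rw [this]
      exact List.drop_suffix _ _
    -- the offset function
    set o : ℤ → ℤ := fun i => if 0 ≤ i then ((substW σ (Fi i.toNat)).length : ℤ)
      else -(((substW σ (Gi (-i).toNat)).length : ℤ)) with ho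
    have h1 : o 0 = 0 := by
      rw [ho]
      simp only [if_pos le_rfl, Int.toNat_zero]
      have : Fi 0 = [] := by rw [hFi]; simp
      rw [this]
      simp [substW]
    have h2 : ∀ i : ℤ, o (i + 1) = o i + ((σ (z m i)).length : ℤ) := by
      intro i
      rcases le_or_gt 0 i with hi | hi
      · have hiN : (i + 1).toNat = i.toNat + 1 := by omega
        have hjj : ((i.toNat : ℤ)) = i := Int.toNat_of_nonneg hi
        rw [ho]
        simp only [if_pos hi, if_pos (by omega : (0:ℤ) ≤ i + 1)]
        rw [hiN, hFsucc, substW_append, List.length_append, substW_singleton, hjj]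
        push_cast
        ring
      · have hiN : 1 ≤ (-i).toNat := by omega
        set iN := (-i).toNat with hiNdef
        have hjj : -((iN : ℤ)) = i := by omega
        rcases eq_or_lt_of_le hiN with heq | hlt
        · -- i = -1
          have hieq : i = -1 := by omega
          have hGi1 : Gi 1 = [z m (-1)] := by
            rw [hGi]
            simp only [List.range_succ, List.range_zero, List.nil_append,
              List.map_cons, List.map_nil]
            norm_num
          have ho0 : o ((-1 : ℤ) + 1) = 0 := by
            rw [show ((-1 : ℤ) + 1) = 0 by norm_num]
            exact h1
          have hom1 : o (-1) = -(((σ (z m (-1))).length : ℤ)) := by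
            rw [ho]
            simp only [if_neg (by norm_num : ¬ (0:ℤ) ≤ -1)]
            rw [show (-(-1 : ℤ)).toNat = 1 by norm_num, hGi1, substW_singleton]
          rw [hieq, ho0, hom1]
          ring
        · -- i < -1
          have hi1 : ¬ ((0:ℤ) ≤ i + 1) := by omega
          rw [ho]
          simp only [if_neg (by omega : ¬ (0:ℤ) ≤ i), if_neg hi1]
          have hiN2 : (-(i+1)).toNat = iN - 1 := by omega
          have hgs : Gi iN = z m i :: Gi (iN - 1) := by
            have := hGsucc (iN - 1)
            rw [show (iN - 1) + 1 = iN by omega] at this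
            rw [this]
            congr 2
            push_cast [Nat.cast_sub (by omega : 1 ≤ iN)]
            omega
          rw [hiN2, hgs, substW_cons, List.length_append]
          push_cast
          ring
    have h3 : ∀ i : ℤ, factorOf (z (m + 1)) (o i) (o (i + 1) - 1) = σ (z m i) := by
      intro i
      have hlen0 := h2 i
      rcases le_or_gt 0 i with hi | hi
      · -- right side
        set iN := i.toNat with hiNdef
        have hjj : ((iN : ℤ)) = i := Int.toNat_of_nonneg hi
        obtain ⟨n, hn⟩ := growR m (iN + 1)
        have hpref0 : Fi (iN + 1) <+: RW (n * P + m) := hFpref (iN + 1) n (by omega)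
        have hpref : substW σ (Fi (iN + 1)) <+: RW (n * P + (m + 1)) := by
          have := substW_prefix (σ := σ) hpref0
          rwa [hRWsucc, show n * P + m + 1 = n * P + (m + 1) by omega] at this
        have hpoint : ∀ u : ℕ, u < (substW σ (Fi (iN + 1))).length →
            z (m + 1) ((u : ℤ)) = (substW σ (Fi (iN + 1))).getD u a := by
          intro u hu
          rw [zR (m + 1) n u (by have := hpref.length_le; omega)]
          exact prefix_getD hpref hu a
        have hdec : substW σ (Fi (iN + 1)) = substW σ (Fi iN) ++ σ (z m i) := by
          rw [hFsucc, substW_append, substW_singleton, hjj]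
        have hoi : o i = ((substW σ (Fi iN)).length : ℤ) := by
          rw [ho]; simp only [if_pos hi]; rfl
        refine factorOf_eq (by omega) ?_
        intro u hu
        have hidx : o i + (u : ℤ) = (((substW σ (Fi iN)).length + u : ℕ) : ℤ) := by
          rw [hoi]; push_cast; ring
        rw [hidx, hpoint _ (by rw [hdec, List.length_append]; omega)]
        rw [List.getD_eq_getElem _ a (by rw [hdec, List.length_append]; omega)]
        have : (substW σ (Fi (iN + 1)))[(substW σ (Fi iN)).length + u]'(by
            rw [hdec, List.length_append]; omega) = (σ (z m i))[u]'hu := by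
          simp only [hdec]
          rw [List.getElem_append_right (by omega)]
          congr 1
          omega
        exact this
      · -- left side
        set iN := (-i).toNat with hiNdef
        have hiN1 : 1 ≤ iN := by omega
        have hjj : -((iN : ℤ)) = i := by omega
        obtain ⟨n, hn⟩ := growL m iN
        have hsuf0 : Gi iN <:+ LW (n * P + m) := hGsuf iN n (by omega)
        have hsuf : substW σ (Gi iN) <:+ LW (n * P + (m + 1)) := by
          have := substW_suffix (σ := σ) hsuf0
          rwa [hLWsucc, show n * P + m + 1 = n * P + (m + 1) by omega] at this
        set S := substW σ (Gi iN) with hS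
        have hpoint : ∀ v : ℕ, 1 ≤ v → v ≤ S.length →
            z (m + 1) (-(v : ℤ)) = S.getD (S.length - v) a := by
          intro v hv1 hv2
          rw [zL (m + 1) n v hv1 (le_trans hv2 hsuf.length_le)]
          exact suffix_getD hsuf hv1 hv2 a
        have hgs : Gi iN = z m i :: Gi (iN - 1) := by
          have := hGsucc (iN - 1)
          rw [show (iN - 1) + 1 = iN by omega] at this
          rw [this]
          congr 2
          push_cast [Nat.cast_sub (by omega : 1 ≤ iN)]
          omega
        have hdec : S = σ (z m i) ++ substW σ (Gi (iN - 1)) := by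
          rw [hS, hgs, substW_cons]
        have hoi : o i = -((S.length : ℤ)) := by
          rw [ho]; simp only [if_neg (by omega : ¬ (0:ℤ) ≤ i)]; rfl
        have hSlen : (σ (z m i)).length ≤ S.length := by
          rw [hdec, List.length_append]; omega
        refine factorOf_eq (by omega) ?_
        intro u hu
        have hidx : o i + (u : ℤ) = -(((S.length - u : ℕ) : ℤ)) := by
          rw [hoi]
          push_cast [Nat.cast_sub (by omega : u ≤ S.length)]
          ring
        rw [hidx, hpoint (S.length - u) (by omega) (by omega)]
        rw [List.getD_eq_getElem _ a (by omega)]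
        have idxeq : S.length - (S.length - u) = u := by omega
        have h5 : S[u]'(by omega) = (σ (z m i))[u]'hu := by
          simp only [hdec]
          rw [List.getElem_append_left hu]
        simp only [idxeq]
        exact h5
    exact ⟨o, h1, h2, h3⟩
  refine ⟨z 0, zmem, P, hP1, z, rfl, ?_, fun k _ => zstep k⟩
  have := zper 0
  rwa [Nat.zero_add] at this

end SubstMin
end
/-- A tame substitution has a periodic point `x₀ ∈ X_σ` for the induced
action `σ : X_σ → X_σ`: there are `x₀ ∈ X_σ` and `p ≥ 1` with `σᵖ(x₀) = x₀`. -/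
theorem statement11 {A : Type*} [Fintype A] (σ : A → List A)
    (hσ : SubstMin.IsSubstitution σ) (htame : SubstMin.Tame σ) :
    ∃ x₀ ∈ SubstMin.XSub σ, ∃ p : ℕ, 1 ≤ p ∧ ∃ ys : ℕ → (ℤ → A),
      ys 0 = x₀ ∧ ys p = x₀ ∧ ∀ k < p, SubstMin.IsSubstImage σ (ys k) (ys (k + 1)) := by
  classical
  obtain ⟨hne, hc⟩ := hσ
  obtain ⟨a, b, P, va, wb, sStar, hal, hbl, hP1, hva, hwb, hsfix, hwit⟩ :=
    SubstMin.exists_periodic_data hne htame hc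
  exact SubstMin.construct σ hne hal hbl hP1 hva hwb hsfix hwit
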